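/- Let φ : F → L^p(Ω) be a separating antitone map on a finite tree F, let γ_ν ∈ ℂ for ν ∈ F, and set g = Σ_{ν ∈ F} γ_ν φ(ν). Then ‖g‖_p^p = Σ_{ν ∈ F} |Σ_{μ ⊆ ν} γ_μ|^p · ‖∇_φ(ν)‖_p^p, where ∇_φ(ν) = φ(ν) − Σ_{ν′ child of ν in F} φ(ν′). -/

import Mathlib

open MeasureTheory Set
open scoped Classical ENNReal

/-- `ν'` is a child of `ν`. -/
def NodeChild (ν' ν : List ℕ) : Prop := ∃ n : ℕ, ν' = ν ++ [n]

/-- The cumulative coefficient along the branch to `ν`. -/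
noncomputable def Coef (F : Finset (List ℕ)) (γ : List ℕ → ℂ) (ν : List ℕ) : ℂ :=
  ∑ μ' ∈ F.filter (fun μ' => μ' <+: ν), γ μ'

lemma treeSum {F : Finset (List ℕ)} (htree : ∀ ν ∈ F, ∀ μ' : List ℕ, μ' <+: ν → μ' ∈ F)
    (γ f : List ℕ → ℂ) :
    ∑ ν ∈ F, Coef F γ ν * (f ν - ∑ ν' ∈ F.filter (fun ν' => NodeChild ν' ν), f ν')
      = ∑ ν ∈ F, γ ν * f ν := by
  classical
  have hparent : ∀ ν' ∈ F, F.filter (fun ν => NodeChild ν' ν)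
      = if ν' = [] then (∅ : Finset (List ℕ)) else {ν'.dropLast} := by
    intro ν' hν'
    ext ν
    simp only [Finset.mem_filter]
    constructor
    · rintro ⟨hνF, n, rfl⟩
      rw [if_neg (by simp), Finset.mem_singleton, List.dropLast_concat]
    · intro hmem
      by_cases h0 : ν' = []
      · rw [if_pos h0] at hmem; exact absurd hmem (Finset.notMem_empty ν)
      · rw [if_neg h0, Finset.mem_singleton] at hmem
        subst hmem
        have hd : ν'.dropLast ++ [ν'.getLast h0] = ν' := List.dropLast_append_getLast h0
        exact ⟨htree ν' hν' _ ⟨[ν'.getLast h0], hd⟩, ⟨ν'.getLast h0, hd.symm⟩⟩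
  have hcoef : ∀ ν ∈ F, ν ≠ [] → Coef F γ ν = Coef F γ ν.dropLast + γ ν := by
    intro ν hν h0
    unfold Coef
    have hsplit : F.filter (fun μ' => μ' <+: ν)
        = insert ν (F.filter (fun μ' => μ' <+: ν.dropLast)) := by
      ext μ'
      simp only [Finset.mem_filter, Finset.mem_insert]
      constructor
      · rintro ⟨hμF, hpre⟩
        rw [← List.dropLast_append_getLast h0] at hpre
        rcases List.prefix_concat_iff.mp hpre with h | h
        · left; rw [h, List.dropLast_append_getLast h0]
        · right; exact ⟨hμF, h⟩
      · rintro (rfl | ⟨hμF, hpre⟩)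
        · exact ⟨hν, List.prefix_refl _⟩
        · exact ⟨hμF, hpre.trans (List.dropLast_prefix ν)⟩
    have hnotmem : ν ∉ F.filter (fun μ' => μ' <+: ν.dropLast) := by
      simp only [Finset.mem_filter, not_and]
      intro _ hpre
      have h1 := hpre.length_le
      have h2 : 0 < ν.length := List.length_pos_iff.mpr h0
      rw [List.length_dropLast] at h1
      omega
    rw [hsplit, Finset.sum_insert hnotmem, add_comm]
  have hnil : ([] : List ℕ) ∈ F → Coef F γ [] = γ [] := by
    intro h
    unfold Coef
    have : F.filter (fun μ' => μ' <+: ([] : List ℕ)) = {[]} := by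
      ext μ'
      simp only [Finset.mem_filter, List.prefix_nil, Finset.mem_singleton]
      exact ⟨fun ⟨_, h'⟩ => h', fun h' => ⟨h' ▸ h, h'⟩⟩
    rw [this, Finset.sum_singleton]
  calc ∑ ν ∈ F, Coef F γ ν * (f ν - ∑ ν' ∈ F.filter (fun ν' => NodeChild ν' ν), f ν')
      = ∑ ν ∈ F, Coef F γ ν * f ν
        - ∑ ν ∈ F, ∑ ν' ∈ F.filter (fun ν' => NodeChild ν' ν), Coef F γ ν * f ν' := by
        simp only [mul_sub, Finset.mul_sum]
        rw [Finset.sum_sub_distrib]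
    _ = ∑ ν ∈ F, Coef F γ ν * f ν
        - ∑ ν' ∈ F, ∑ ν ∈ F.filter (fun ν => NodeChild ν' ν), Coef F γ ν * f ν' := by
        congr 1
        refine Finset.sum_comm' (fun ν ν' => ?_)
        simp only [Finset.mem_filter]
        tauto
    _ = ∑ ν ∈ F, Coef F γ ν * f ν
        - ∑ ν' ∈ F, (if ν' = [] then 0 else Coef F γ ν'.dropLast * f ν') := by
        congr 1
        refine Finset.sum_congr rfl (fun ν' hν' => ?_)
        rw [hparent ν' hν']
        by_cases h0 : ν' = [] <;> simp [h0]
    _ = ∑ ν ∈ F, (Coef F γ ν * f ν - if ν = [] then 0 else Coef F γ ν.dropLast * f ν) := by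
        rw [Finset.sum_sub_distrib]
    _ = ∑ ν ∈ F, γ ν * f ν := by
        refine Finset.sum_congr rfl (fun ν hν => ?_)
        by_cases h0 : ν = []
        · subst h0; rw [if_pos rfl, sub_zero, hnil hν]
        · rw [if_neg h0, hcoef ν hν h0, add_mul, add_sub_cancel_left]

theorem stmt13 {X : Type*} [MeasurableSpace X] (μ : Measure X) (p : ℝ) (hp : 1 ≤ p)
    (F : Finset (List ℕ)) (htree : ∀ ν ∈ F, ∀ μ' : List ℕ, μ' <+: ν → μ' ∈ F)
    (φ : List ℕ → X → ℂ) (hmeas : ∀ ν ∈ F, AEMeasurable (φ ν) μ)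
    -- `φ` is antitone for the subvector order:
    (hanti : ∀ ν ∈ F, ∀ ν' ∈ F, ν <+: ν' →
      ∀ᵐ t ∂μ, φ ν' t ≠ 0 → φ ν' t = φ ν t)
    -- `φ` is separating:
    (hsep : ∀ ν ∈ F, ∀ ν' ∈ F, ¬ ν <+: ν' → ¬ ν' <+: ν →
      ∀ᵐ t ∂μ, φ ν t * φ ν' t = 0)
    (γ : List ℕ → ℂ) :
    ∫⁻ t, ENNReal.ofReal (‖∑ ν ∈ F, γ ν * φ ν t‖ ^ p) ∂μ =
      ∑ ν ∈ F, ENNReal.ofReal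
          (‖∑ μ' ∈ F.filter (fun μ' => μ' <+: ν), γ μ'‖ ^ p) *
        ∫⁻ t, ENNReal.ofReal
          (‖φ ν t - ∑ ν' ∈ F.filter (fun ν' => NodeChild ν' ν), φ ν' t‖ ^ p) ∂μ := by
  classical
  have hp0 : p ≠ 0 := by linarith
  have hppos : (0:ℝ) ≤ p := by linarith
  set D : List ℕ → X → ℂ :=
    fun ν t => φ ν t - ∑ ν' ∈ F.filter (fun ν' => NodeChild ν' ν), φ ν' t with hDdef
  -- measurability of the building blocks
  have hDmeas : ∀ ν ∈ F, AEMeasurable (D ν) μ := by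
    intro ν hν
    exact (hmeas ν hν).sub
      (Finset.aemeasurable_fun_sum _ fun i hi => hmeas i (Finset.mem_filter.mp hi).1)
  have hcont : Continuous (fun z : ℂ => ENNReal.ofReal (‖z‖ ^ p)) := by
    exact ENNReal.continuous_ofReal.comp
      ((Real.continuous_rpow_const hppos).comp continuous_norm)
  have hDmeas' : ∀ ν ∈ F,
      AEMeasurable (fun t => ENNReal.ofReal (‖D ν t‖ ^ p)) μ := by
    intro ν hν
    exact hcont.measurable.comp_aemeasurable (hDmeas ν hν)
  -- support of D ν is contained in the support of φ ν (a.e.)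
  have hsupp : ∀ ν ∈ F, ∀ᵐ t ∂μ, φ ν t = 0 → D ν t = 0 := by
    intro ν hν
    have h1 : ∀ᵐ t ∂μ, ∀ ν' ∈ F.filter (fun ν' => NodeChild ν' ν),
        (φ ν t = 0 → φ ν' t = 0) := by
      rw [Filter.eventually_all_finset]
      intro ν' hν'
      obtain ⟨hν'F, hchild⟩ := Finset.mem_filter.mp hν'
      have hpre : ν <+: ν' := by obtain ⟨n, rfl⟩ := hchild; exact ⟨[n], rfl⟩
      filter_upwards [hanti ν hν ν' hν'F hpre] with t ht h0
      by_contra hne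
      exact hne (by rw [ht hne, h0])
    filter_upwards [h1] with t ht h0
    show φ ν t - _ = 0
    rw [h0, Finset.sum_eq_zero (fun ν' hν' => ht ν' hν' h0), sub_zero]
  -- if ν is a strict prefix of ν', then D ν vanishes on the support of φ ν' (a.e.)
  have hpref : ∀ ν ∈ F, ∀ ν' ∈ F, ν <+: ν' → ν ≠ ν' →
      ∀ᵐ t ∂μ, φ ν' t ≠ 0 → D ν t = 0 := by
    intro ν hν ν' hν' hpre hne
    have hlen : ν.length < ν'.length :=
      Nat.lt_of_le_of_ne hpre.length_le
        (fun h => hne (hpre.eq_of_length h))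
    set c0 : List ℕ := ν ++ [ν'.get ⟨ν.length, hlen⟩] with hc0
    have hc0pre : c0 <+: ν' := List.concat_get_prefix hpre hlen
    have hc0F : c0 ∈ F := htree ν' hν' c0 hc0pre
    have hc0child : NodeChild c0 ν := ⟨_, rfl⟩
    have h3 : ∀ᵐ t ∂μ, ∀ b ∈ F.filter (fun ν'' => NodeChild ν'' ν),
        (b ≠ c0 → φ c0 t * φ b t = 0) := by
      rw [Filter.eventually_all_finset]
      intro b hb
      obtain ⟨hbF, m, rfl⟩ := Finset.mem_filter.mp hb
      by_cases hbc : ν ++ [m] = c0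
      · exact Filter.Eventually.of_forall (fun t h => absurd hbc h)
      · obtain ⟨k, hk⟩ : ∃ k, c0 = ν ++ [k] := ⟨_, rfl⟩
        have hlen2 : (ν ++ [m]).length = c0.length := by rw [hk]; simp
        have hnp1 : ¬ c0 <+: ν ++ [m] :=
          fun h => hbc (h.eq_of_length hlen2.symm).symm
        have hnp2 : ¬ ν ++ [m] <+: c0 :=
          fun h => hbc (h.eq_of_length hlen2)
        filter_upwards [hsep c0 hc0F (ν ++ [m]) hbF hnp1 hnp2] with t ht _
        exact ht
    filter_upwards [hanti c0 hc0F ν' hν' hc0pre, hanti ν hν c0 hc0F ⟨_, rfl⟩, h3]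
      with t ht1 ht2 ht3 hφ
    have hc0t : φ c0 t ≠ 0 := by rw [← ht1 hφ]; exact hφ
    have hφν : φ c0 t = φ ν t := ht2 hc0t
    have hsum : ∑ ν'' ∈ F.filter (fun ν'' => NodeChild ν'' ν), φ ν'' t = φ c0 t :=
      Finset.sum_eq_single_of_mem c0 (Finset.mem_filter.mpr ⟨hc0F, hc0child⟩)
        (fun b hb hbne => (mul_eq_zero.mp (ht3 b hb hbne)).resolve_left hc0t)
    show φ ν t - ∑ ν'' ∈ F.filter (fun ν'' => NodeChild ν'' ν), φ ν'' t = 0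
    rw [hsum, ← hφν, sub_self]
  -- pairwise disjointness of the supports of the D ν (a.e.)
  have hdisj : ∀ ν ∈ F, ∀ ν' ∈ F, ν ≠ ν' → ∀ᵐ t ∂μ, D ν t = 0 ∨ D ν' t = 0 := by
    intro ν hν ν' hν' hne
    by_cases h1 : ν <+: ν'
    · filter_upwards [hpref ν hν ν' hν' h1 hne, hsupp ν' hν'] with t ha hb
      by_cases hz : φ ν' t = 0
      · exact Or.inr (hb hz)
      · exact Or.inl (ha hz)
    by_cases h2 : ν' <+: ν
    · filter_upwards [hpref ν' hν' ν hν h2 (Ne.symm hne), hsupp ν hν] with t ha hb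
      by_cases hz : φ ν t = 0
      · exact Or.inl (hb hz)
      · exact Or.inr (ha hz)
    · filter_upwards [hsep ν hν ν' hν' h1 h2, hsupp ν hν, hsupp ν' hν'] with t ht ha hb
      rcases mul_eq_zero.mp ht with h | h
      · exact Or.inl (ha h)
      · exact Or.inr (hb h)
  have hdisj' : ∀ᵐ t ∂μ, ∀ ν ∈ F, ∀ ν' ∈ F, ν ≠ ν' → (D ν t = 0 ∨ D ν' t = 0) := by
    rw [Filter.eventually_all_finset]
    intro ν hν
    rw [Filter.eventually_all_finset]
    intro ν' hν'
    by_cases hne : ν = ν'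
    · exact Filter.Eventually.of_forall (fun t h => absurd hne h)
    · filter_upwards [hdisj ν hν ν' hν' hne] with t ht _
      exact ht
  -- the pointwise identity
  have hpt : ∀ᵐ t ∂μ, ENNReal.ofReal (‖∑ ν ∈ F, γ ν * φ ν t‖ ^ p)
      = ∑ ν ∈ F, ENNReal.ofReal (‖Coef F γ ν‖ ^ p)
          * ENNReal.ofReal (‖D ν t‖ ^ p) := by
    filter_upwards [hdisj'] with t ht
    have hsum0 : ∑ ν ∈ F, γ ν * φ ν t = ∑ ν ∈ F, Coef F γ ν * D ν t :=
      (treeSum htree γ (fun ν => φ ν t)).symm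
    rw [hsum0]
    have hterm : ∀ ν, ENNReal.ofReal (‖Coef F γ ν * D ν t‖ ^ p)
        = ENNReal.ofReal (‖Coef F γ ν‖ ^ p)
            * ENNReal.ofReal (‖D ν t‖ ^ p) := by
      intro ν
      rw [norm_mul, Real.mul_rpow (norm_nonneg _) (norm_nonneg _),
        ENNReal.ofReal_mul (Real.rpow_nonneg (norm_nonneg _) p)]
    by_cases hex : ∃ ν₀ ∈ F, D ν₀ t ≠ 0
    · obtain ⟨ν₀, hν₀, hD0⟩ := hex
      have hz : ∀ ν ∈ F, ν ≠ ν₀ → D ν t = 0 :=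
        fun ν hν hne => (ht ν hν ν₀ hν₀ hne).resolve_right hD0
      have h1 : ∑ ν ∈ F, Coef F γ ν * D ν t = Coef F γ ν₀ * D ν₀ t :=
        Finset.sum_eq_single_of_mem ν₀ hν₀
          (fun b hb hbne => by rw [hz b hb hbne, mul_zero])
      have h2 : ∑ ν ∈ F, ENNReal.ofReal (‖Coef F γ ν‖ ^ p)
            * ENNReal.ofReal (‖D ν t‖ ^ p)
          = ENNReal.ofReal (‖Coef F γ ν₀‖ ^ p)
            * ENNReal.ofReal (‖D ν₀ t‖ ^ p) :=
        Finset.sum_eq_single_of_mem ν₀ hν₀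
          (fun b hb hbne => by
            rw [hz b hb hbne]
            simp [Real.zero_rpow hp0])
      rw [h1, h2]
      exact hterm ν₀
    · push_neg at hex
      have h1 : ∑ ν ∈ F, Coef F γ ν * D ν t = 0 :=
        Finset.sum_eq_zero (fun ν hν => by rw [hex ν hν, mul_zero])
      have h2 : ∑ ν ∈ F, ENNReal.ofReal (‖Coef F γ ν‖ ^ p)
            * ENNReal.ofReal (‖D ν t‖ ^ p) = 0 :=
        Finset.sum_eq_zero (fun ν hν => by
          rw [hex ν hν]
          simp [Real.zero_rpow hp0])
      rw [h1, h2]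
      simp [Real.zero_rpow hp0]
  -- conclude
  calc ∫⁻ t, ENNReal.ofReal (‖∑ ν ∈ F, γ ν * φ ν t‖ ^ p) ∂μ
      = ∫⁻ t, ∑ ν ∈ F, ENNReal.ofReal (‖Coef F γ ν‖ ^ p)
          * ENNReal.ofReal (‖D ν t‖ ^ p) ∂μ := lintegral_congr_ae hpt
    _ = ∑ ν ∈ F, ∫⁻ t, ENNReal.ofReal (‖Coef F γ ν‖ ^ p)
          * ENNReal.ofReal (‖D ν t‖ ^ p) ∂μ :=
        lintegral_finset_sum' F (fun ν hν => (hDmeas' ν hν).const_mul _)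
    _ = ∑ ν ∈ F, ENNReal.ofReal (‖Coef F γ ν‖ ^ p)
          * ∫⁻ t, ENNReal.ofReal (‖D ν t‖ ^ p) ∂μ :=
        Finset.sum_congr rfl (fun ν hν =>
          lintegral_const_mul' _ _ ENNReal.ofReal_ne_top)
    _ = _ := rfl
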